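/- arXiv:2101.02586 — 10 statements merged into one kernel-verified Lean document; each statement's English description precedes it below -/
import Mathlib

section
/- Let M be an n × n integer matrix such that every diagonal entry is ≥ -1, every off-diagonal entry is ≥ 0, and every row sum equals 1. Then there exists a nonempty set of rows of M whose sum is a nonzero vector with all entries in {0, 1}. -/
/-- Key combinatorial lemma: if `A` is a nonnegative integer matrix whose rows (restricted
to a finite support set `s`) sum to `2`, then there is a nonempty `T ⊆ s` such that every
column sum of `A` over `T` is in `{1,2}` at indices of `T` and at most `1` elsewhere in `s`. -/
theorem key_lemma {n : ℕ} :
    ∀ (N : ℕ) (s : Finset (Fin n)) (A : Fin n → Fin n → ℤ),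
    s.card ≤ N → s.Nonempty →
    (∀ i j, 0 ≤ A i j) →
    (∀ i ∈ s, ∑ j ∈ s, A i j = 2) →
    ∃ T : Finset (Fin n), T ⊆ s ∧ T.Nonempty ∧
      (∀ j ∈ T, 1 ≤ ∑ i ∈ T, A i j ∧ ∑ i ∈ T, A i j ≤ 2) ∧
      (∀ j ∈ s, j ∉ T → ∑ i ∈ T, A i j ≤ 1) := by
  intro N
  induction N with
  | zero =>
    intro s A hc hne _ _
    rw [Nat.le_zero, Finset.card_eq_zero] at hc
    exact absurd hc (Finset.nonempty_iff_ne_empty.mp hne)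
  | succ N ih =>
    intro s A hcard hne hpos hrow
    by_cases hloop : ∃ v ∈ s, 1 ≤ A v v
    · -- Case 1: a "loop": take T = {v}
      obtain ⟨v, hvs, hvv⟩ := hloop
      refine ⟨{v}, Finset.singleton_subset_iff.mpr hvs, ⟨v, Finset.mem_singleton_self v⟩, ?_, ?_⟩
      · intro j hj
        rw [Finset.mem_singleton] at hj
        subst hj
        rw [Finset.sum_singleton]
        refine ⟨hvv, ?_⟩
        calc A j j ≤ ∑ k ∈ s, A j k :=
              Finset.single_le_sum (fun k _ => hpos j k) hvs
          _ = 2 := hrow j hvs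
      · intro j hjs hjT
        rw [Finset.sum_singleton]
        have hvj : v ≠ j := by
          rintro rfl
          exact hjT (Finset.mem_singleton_self v)
        have hsub : ({v, j} : Finset (Fin n)) ⊆ s := by
          intro x hx
          rcases Finset.mem_insert.mp hx with h | h
          · subst h; exact hvs
          · rw [Finset.mem_singleton] at h; subst h; exact hjs
        have hsum : ∑ x ∈ ({v, j} : Finset (Fin n)), A v x ≤ ∑ x ∈ s, A v x :=
          Finset.sum_le_sum_of_subset_of_nonneg hsub (fun i _ _ => hpos v i)
        rw [Finset.sum_pair hvj, hrow v hvs] at hsum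
        linarith
    · push_neg at hloop
      have hdiag0 : ∀ v ∈ s, A v v = 0 := by
        intro v hv
        have h1 := hloop v hv
        have h2 := hpos v v
        omega
      by_cases h0 : ∃ u ∈ s, ∑ i ∈ s, A i u ≤ 0
      · -- Case 2a: a source: delete it
        obtain ⟨u, hus, hu0⟩ := h0
        have hcol0 : ∀ i ∈ s, A i u = 0 := by
          have hz : ∑ i ∈ s, A i u = 0 :=
            le_antisymm hu0 (Finset.sum_nonneg fun i _ => hpos i u)
          exact fun i hi => (Finset.sum_eq_zero_iff_of_nonneg (fun i _ => hpos i u)).mp hz i hi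
        have hs'ne : (s.erase u).Nonempty := by
          rw [Finset.nonempty_iff_ne_empty]
          intro h
          have hsu : s = {u} := by
            apply Finset.eq_singleton_iff_unique_mem.mpr
            refine ⟨hus, fun x hx => ?_⟩
            by_contra hxu
            exact absurd (Finset.mem_erase.mpr ⟨hxu, hx⟩) (by rw [h]; exact Finset.notMem_empty x)
          have h2 := hrow u hus
          rw [hsu, Finset.sum_singleton, hdiag0 u hus] at h2
          norm_num at h2
        have hcard' : (s.erase u).card ≤ N := by
          have := Finset.card_erase_of_mem hus
          omega
        have hrow' : ∀ i ∈ s.erase u, ∑ j ∈ s.erase u, A i j = 2 := by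
          intro i hi
          have his : i ∈ s := Finset.mem_of_mem_erase hi
          rw [Finset.sum_erase_eq_sub hus, hrow i his, hcol0 i his]
          ring
        obtain ⟨T, hTs, hTne, hTin, hTout⟩ := ih (s.erase u) A hcard' hs'ne hpos hrow'
        refine ⟨T, hTs.trans (Finset.erase_subset u s), hTne, hTin, ?_⟩
        intro j hjs hjT
        by_cases hj : j = u
        · subst hj
          have hz : ∑ i ∈ T, A i j = 0 :=
            Finset.sum_eq_zero fun i hi => hcol0 i (Finset.mem_of_mem_erase (hTs hi))
          rw [hz]; norm_num
        · exact hTout j (Finset.mem_erase.mpr ⟨hj, hjs⟩) hjT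
      · push_neg at h0
        by_cases h1 : ∃ u ∈ s, ∑ i ∈ s, A i u ≤ 1
        · -- Case 2b: a column of sum 1: delete u, double the sibling edge
          obtain ⟨u, hus, hu1⟩ := h1
          have hcolu : ∑ i ∈ s, A i u = 1 := le_antisymm hu1 (h0 u hus)
          have hex : ∃ x ∈ s, 1 ≤ A x u := by
            by_contra h
            push_neg at h
            have : ∑ i ∈ s, A i u ≤ 0 := Finset.sum_nonpos fun i hi => by
              have := h i hi; omega
            omega
          obtain ⟨x₀, hx₀s, hx₀⟩ := hex
          have hx₀u : A x₀ u = 1 := by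
            have hle : A x₀ u ≤ ∑ i ∈ s, A i u :=
              Finset.single_le_sum (fun i _ => hpos i u) hx₀s
            omega
          have hcol_other : ∀ i ∈ s, i ≠ x₀ → A i u = 0 := by
            intro i his hine
            have h2 : ∑ i ∈ s.erase x₀, A i u = 0 := by
              rw [Finset.sum_erase_eq_sub hx₀s, hcolu, hx₀u]; ring
            exact (Finset.sum_eq_zero_iff_of_nonneg
              (fun i _ => hpos i u)).mp h2 i (Finset.mem_erase.mpr ⟨hine, his⟩)
          have hx₀u_ne : x₀ ≠ u := by
            rintro rfl
            rw [hdiag0 x₀ hx₀s] at hx₀u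
            norm_num at hx₀u
          have hus' : u ∈ s := hus
          have hrowx : ∑ j ∈ s.erase u, A x₀ j = 1 := by
            rw [Finset.sum_erase_eq_sub hus, hrow x₀ hx₀s, hx₀u]; ring
          have hey : ∃ y ∈ s.erase u, 1 ≤ A x₀ y := by
            by_contra h
            push_neg at h
            have : ∑ j ∈ s.erase u, A x₀ j ≤ 0 := Finset.sum_nonpos fun j hj => by
              have := h j hj; omega
            omega
          obtain ⟨y₀, hy₀s', hy₀⟩ := hey
          have hy₀x₀ : y₀ ≠ x₀ := by
            intro h
            rw [h, hdiag0 x₀ hx₀s] at hy₀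
            norm_num at hy₀
          -- modified matrix
          set A' : Fin n → Fin n → ℤ :=
            fun i j => A i j + (if i = x₀ ∧ j = y₀ then 1 else 0) with hA'
          have hpos' : ∀ i j, 0 ≤ A' i j := by
            intro i j
            have := hpos i j
            simp only [hA']
            split <;> omega
          have hs'ne : (s.erase u).Nonempty := ⟨y₀, hy₀s'⟩
          have hcard' : (s.erase u).card ≤ N := by
            have := Finset.card_erase_of_mem hus
            omega
          have hrow' : ∀ i ∈ s.erase u, ∑ j ∈ s.erase u, A' i j = 2 := by
            intro i hi
            have his : i ∈ s := Finset.mem_of_mem_erase hi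
            have hsplit : ∑ j ∈ s.erase u, A' i j =
                (∑ j ∈ s.erase u, A i j) +
                  ∑ j ∈ s.erase u, (if i = x₀ ∧ j = y₀ then (1:ℤ) else 0) := by
              simp only [hA']
              rw [Finset.sum_add_distrib]
            have hind : (∑ j ∈ s.erase u, if i = x₀ ∧ j = y₀ then (1:ℤ) else 0) =
                if i = x₀ then 1 else 0 := by
              by_cases hix : i = x₀
              · simp only [hix, true_and]
                rw [Finset.sum_ite_eq' (s.erase u) y₀ (fun _ => (1:ℤ))]
                simp [hy₀s']
              · simp [hix]
            by_cases hix : i = x₀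
            · subst hix
              rw [hsplit, hind, if_pos rfl, Finset.sum_erase_eq_sub hus, hrow i his, hx₀u]
              ring
            · rw [hsplit, hind, if_neg hix, Finset.sum_erase_eq_sub hus, hrow i his,
                hcol_other i his hix]
              ring
          obtain ⟨T, hTs, hTne, hTin, hTout⟩ := ih (s.erase u) A' hcard' hs'ne hpos' hrow'
          have hsum_rel : ∀ j, ∑ i ∈ T, A i j =
              (∑ i ∈ T, A' i j) - (if x₀ ∈ T ∧ j = y₀ then 1 else 0) := by
            intro j
            have hsplit : ∑ i ∈ T, A' i j =
                (∑ i ∈ T, A i j) + ∑ i ∈ T, (if i = x₀ ∧ j = y₀ then (1:ℤ) else 0) := by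
              simp only [hA']
              rw [Finset.sum_add_distrib]
            have hind : (∑ i ∈ T, if i = x₀ ∧ j = y₀ then (1:ℤ) else 0) =
                if x₀ ∈ T ∧ j = y₀ then 1 else 0 := by
              by_cases hjy : j = y₀
              · simp only [hjy, and_true]
                rw [Finset.sum_ite_eq' T x₀ (fun _ => (1:ℤ))]
              · simp [hjy]
            rw [hsplit, hind]
            ring
          have hTnoU : u ∉ T := fun h => (Finset.mem_erase.mp (hTs h)).1 rfl
          have h2le : x₀ ∈ T → 2 ≤ ∑ i ∈ T, A' i y₀ := by
            intro hxT
            have hA'eq : A' x₀ y₀ = A x₀ y₀ + 1 := by simp [hA']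
            have hA'xy : 2 ≤ A' x₀ y₀ := by omega
            calc (2:ℤ) ≤ A' x₀ y₀ := hA'xy
              _ ≤ ∑ i ∈ T, A' i y₀ :=
                  Finset.single_le_sum (fun i _ => hpos' i y₀) hxT
          refine ⟨T, hTs.trans (Finset.erase_subset u s), hTne, ?_, ?_⟩
          · intro j hjT
            by_cases hxT : x₀ ∈ T
            · by_cases hjy : j = y₀
              · subst hjy
                have hub := (hTin j hjT).2
                have hlb := h2le hxT
                have hif : (if x₀ ∈ T ∧ j = j then (1:ℤ) else 0) = 1 := by simp [hxT]
                rw [hsum_rel j, hif]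
                omega
              · rw [hsum_rel j, if_neg (fun h => hjy h.2), sub_zero]
                exact hTin j hjT
            · rw [hsum_rel j, if_neg (fun h => hxT h.1), sub_zero]
              exact hTin j hjT
          · intro j hjs hjT
            by_cases hju : j = u
            · subst hju
              have hz : ∑ i ∈ T, A i j = if x₀ ∈ T then 1 else 0 := by
                have hcongr : ∀ i ∈ T, A i j = if i = x₀ then 1 else 0 := by
                  intro i hi
                  have his : i ∈ s := Finset.mem_of_mem_erase (hTs hi)
                  by_cases h : i = x₀
                  · subst h; simp [hx₀u]
                  · simp [h, hcol_other i his h]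
                rw [Finset.sum_congr rfl hcongr,
                  Finset.sum_ite_eq' T x₀ (fun _ => (1:ℤ))]
              rw [hz]
              split <;> norm_num
            · have hjs' : j ∈ s.erase u := Finset.mem_erase.mpr ⟨hju, hjs⟩
              by_cases hxT : x₀ ∈ T
              · by_cases hjy : j = y₀
                · subst hjy
                  have := hTout j hjs' hjT
                  have := h2le hxT
                  omega
                · rw [hsum_rel j, if_neg (fun h => hjy h.2), sub_zero]
                  exact hTout j hjs' hjT
              · rw [hsum_rel j, if_neg (fun h => hxT h.1), sub_zero]
                exact hTout j hjs' hjT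
        · -- Case 2c: all column sums at least 2, hence all equal 2: take T = s
          push_neg at h1
          have htot : ∑ u ∈ s, (∑ i ∈ s, A i u) = 2 * s.card := by
            rw [Finset.sum_comm]
            rw [Finset.sum_congr rfl (fun i hi => hrow i hi)]
            simp [mul_comm]
          have hall2 : ∀ u ∈ s, ∑ i ∈ s, A i u = 2 := by
            have hz : ∑ u ∈ s, ((∑ i ∈ s, A i u) - 2) = 0 := by
              rw [Finset.sum_sub_distrib, htot]
              simp [mul_comm]
            intro u hu
            have hterm := (Finset.sum_eq_zero_iff_of_nonneg
              (fun v hv => by have := h1 v hv; omega)).mp hz u hu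
            omega
          refine ⟨s, subset_rfl, hne, ?_, ?_⟩
            
          · intro j hj
            rw [hall2 j hj]
            norm_num
          · intro j hjs hjT
            exact absurd hjs hjT

/-- Main lemma: for any matrix in `𝓜ₙ` some nonempty set of rows sums to a nonzero
zero-one vector. -/
theorem exists_rows_sum_zero_one {n : ℕ} (hn : 1 ≤ n) (M : Matrix (Fin n) (Fin n) ℤ)
    (hdiag : ∀ i, -1 ≤ M i i) (hoff : ∀ i j, i ≠ j → 0 ≤ M i j)
    (hrow : ∀ i, ∑ j, M i j = 1) :
    ∃ I : Finset (Fin n), I.Nonempty ∧ (∑ i ∈ I, M i) ≠ 0 ∧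
      ∀ j, (∑ i ∈ I, M i j) = 0 ∨ (∑ i ∈ I, M i j) = 1 := by
  have hnn : Nonempty (Fin n) := ⟨⟨0, hn⟩⟩
  set A : Fin n → Fin n → ℤ := fun i j => M i j + (if i = j then 1 else 0) with hA
  have hpos : ∀ i j, 0 ≤ A i j := by
    intro i j
    simp only [hA]
    split
    · next h =>
      subst h
      linarith [hdiag i]
    · next h =>
      simpa using hoff i j h
  have hArow : ∀ i ∈ (Finset.univ : Finset (Fin n)), ∑ j ∈ Finset.univ, A i j = 2 := by
    intro i _
    simp only [hA]
    rw [Finset.sum_add_distrib, hrow i, Finset.sum_ite_eq Finset.univ i (fun _ => (1:ℤ))]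
    simp
  obtain ⟨T, _, hTne, hTin, hTout⟩ :=
    key_lemma (Finset.univ.card) Finset.univ A le_rfl Finset.univ_nonempty hpos hArow
  have hsum_rel : ∀ j, ∑ i ∈ T, M i j = (∑ i ∈ T, A i j) - (if j ∈ T then 1 else 0) := by
    intro j
    have hsplit : ∑ i ∈ T, A i j =
        (∑ i ∈ T, M i j) + ∑ i ∈ T, (if i = j then (1:ℤ) else 0) := by
      simp only [hA]
      rw [Finset.sum_add_distrib]
    rw [hsplit, Finset.sum_ite_eq' T j (fun _ => (1:ℤ))]
    ring
  have hcond : ∀ j, (∑ i ∈ T, M i j) = 0 ∨ (∑ i ∈ T, M i j) = 1 := by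
    intro j
    by_cases hj : j ∈ T
    · have h1 := (hTin j hj).1
      have h2 := (hTin j hj).2
      rw [hsum_rel j, if_pos hj]
      omega
    · have h1 := hTout j (Finset.mem_univ j) hj
      have h2 : 0 ≤ ∑ i ∈ T, M i j := by
        apply Finset.sum_nonneg
        intro i hi
        have hij : i ≠ j := fun h => hj (h ▸ hi)
        exact hoff i j hij
      rw [hsum_rel j, if_neg hj] at *
      simp only [sub_zero] at *
      have h3 : ∑ i ∈ T, A i j = ∑ i ∈ T, M i j := by
        rw [hsum_rel j, if_neg hj, sub_zero]
      omega
  refine ⟨T, hTne, ?_, hcond⟩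
  intro h0
  have hzero : ∀ j, ∑ i ∈ T, M i j = 0 := by
    intro j
    have := congrFun h0 j
    exact (Finset.sum_apply j T (fun i => M i)).symm.trans this
  have hcardz : (T.card : ℤ) = 0 := by
    calc (T.card : ℤ) = ∑ _i ∈ T, (1:ℤ) := by simp
      _ = ∑ i ∈ T, ∑ j, M i j := Finset.sum_congr rfl fun i _ => (hrow i).symm
      _ = ∑ j, ∑ i ∈ T, M i j := Finset.sum_comm
      _ = 0 := by simp [hzero]
  have := Finset.card_pos.mpr hTne
  omega
end

section
/- Let A be a finite, generating, sum-full, zero-sum-free subset of an abelian group G, and let H be a proper subgroup of G. Then there exist a_1, a_2, a_3, a_4 ∈ A \ H with a_1 + a_2 = a_3 + a_4 and {a_1, a_2} ≠ {a_3, a_4} (as unordered pairs). -/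
/-- A finite generating sum-full zero-sum-free set has a nontrivial additive quadruple
outside any proper subgroup. -/
theorem exists_additive_quadruple_outside {G : Type*} [AddCommGroup G] (A : Finset G)
    (hgen : AddSubgroup.closure (A : Set G) = ⊤)
    (hsf : ∀ a ∈ A, ∃ b ∈ A, ∃ c ∈ A, a = b + c)
    (hzsf : ∀ S ⊆ A, S.Nonempty → ∑ x ∈ S, x ≠ 0)
    (H : AddSubgroup G) (hH : H ≠ ⊤) :
    ∃ a₁ ∈ A, ∃ a₂ ∈ A, ∃ a₃ ∈ A, ∃ a₄ ∈ A,
      a₁ ∉ H ∧ a₂ ∉ H ∧ a₃ ∉ H ∧ a₄ ∉ H ∧ a₁ + a₂ = a₃ + a₄ ∧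
      ¬((a₁ = a₃ ∧ a₂ = a₄) ∨ (a₁ = a₄ ∧ a₂ = a₃)) := by
  classical
  by_contra hcon
  push_neg at hcon
  have h0 : (0:G) ∉ A := by
    intro h
    exact hzsf {0} (Finset.singleton_subset_iff.mpr h) (Finset.singleton_nonempty 0) (by simp)
  have key : ∀ a : G, ∃ b : G, a ∈ A → a ∉ H → (b ∈ A ∧ b ∉ H ∧ a - b ∈ A) := by
    intro a
    by_cases ha : a ∈ A ∧ a ∉ H
    · obtain ⟨b, hb, c, hc, habc⟩ := hsf a ha.1
      by_cases hbH : b ∈ H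
      · refine ⟨c, fun _ _ => ⟨hc, ?_, ?_⟩⟩
        · intro hcH; exact ha.2 (habc ▸ H.add_mem hbH hcH)
        · have h1 : a - c = b := by rw [habc]; abel
          rw [h1]; exact hb
      · refine ⟨b, fun _ _ => ⟨hb, hbH, ?_⟩⟩
        have h1 : a - b = c := by rw [habc]; abel
        rw [h1]; exact hc
    · exact ⟨0, fun h1 h2 => absurd ⟨h1, h2⟩ ha⟩
  choose f hf using key
  set B : Finset G := A.filter (fun a => a ∉ H) with hB
  have hBmem : ∀ a, a ∈ B ↔ a ∈ A ∧ a ∉ H := by intro a; simp [hB]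
  have hfB : ∀ a ∈ B, f a ∈ B := by
    intro a ha
    rw [hBmem] at ha ⊢
    exact ⟨(hf a ha.1 ha.2).1, (hf a ha.1 ha.2).2.1⟩
  have hBne : B.Nonempty := by
    by_contra hBe
    apply hH
    rw [Finset.not_nonempty_iff_eq_empty] at hBe
    have hAH : (A : Set G) ⊆ H := by
      intro a ha
      by_contra haH
      have : a ∈ B := (hBmem a).mpr ⟨ha, haH⟩
      simp [hBe] at this
    have hle := (AddSubgroup.closure_le H).mpr hAH
    rw [hgen] at hle
    exact top_le_iff.mp hle
  have hfix : ∀ a ∈ B, f a ≠ a := by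
    intro a ha hfa
    rw [hBmem] at ha
    have h1 : a - f a ∈ A := (hf a ha.1 ha.2).2.2
    rw [hfa, sub_self] at h1
    exact h0 h1
  have hginj : ∀ a ∈ B, ∀ a' ∈ B, a - f a = a' - f a' → a = a' := by
    intro a ha a' ha' hg
    by_contra hne
    have haB := ha
    rw [hBmem] at ha ha'
    have hsum : a + f a' = a' + f a := sub_eq_sub_iff_add_eq_add.mp hg
    have := hcon a ha.1 (f a') (hf a' ha'.1 ha'.2).1 a' ha'.1 (f a) (hf a ha.1 ha.2).1
      ha.2 (hf a' ha'.1 ha'.2).2.1 ha'.2 (hf a ha.1 ha.2).2.1 hsum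
    rcases this with ⟨h1, _⟩ | ⟨h1, _⟩
    · exact hne h1
    · exact hfix a haB h1.symm
  set 𝒮 := B.powerset.filter (fun S => S.Nonempty ∧ S.image f ⊆ S) with h𝒮
  have hB𝒮 : B ∈ 𝒮 := by
    rw [h𝒮, Finset.mem_filter, Finset.mem_powerset]
    refine ⟨le_refl B, hBne, fun x hx => ?_⟩
    obtain ⟨a, ha, rfl⟩ := Finset.mem_image.mp hx
    exact hfB a ha
  obtain ⟨S, hS𝒮, hSmin⟩ := Finset.exists_min_image 𝒮 Finset.card ⟨B, hB𝒮⟩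
  rw [h𝒮, Finset.mem_filter, Finset.mem_powerset] at hS𝒮
  obtain ⟨hSB, hSne, hSim⟩ := hS𝒮
  have him𝒮 : S.image f ∈ 𝒮 := by
    rw [h𝒮, Finset.mem_filter, Finset.mem_powerset]
    exact ⟨hSim.trans hSB, hSne.image f, Finset.image_subset_image hSim⟩
  have heq : S.image f = S :=
    Finset.eq_of_subset_of_card_le hSim (hSmin (S.image f) him𝒮)
  have hcardeq : (S.image f).card = S.card := by rw [heq]
  have hfinjS : ∀ x ∈ S, ∀ y ∈ S, f x = f y → x = y := by
    have := Finset.injOn_of_card_image_eq hcardeq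
    intro x hx y hy hxy
    exact this hx hy hxy
  have hsumf : ∑ a ∈ S, f a = ∑ a ∈ S, a := by
    have h1 : ∑ x ∈ S.image f, x = ∑ a ∈ S, f a := Finset.sum_image hfinjS
    rw [heq] at h1
    exact h1.symm
  set T := S.image (fun a => a - f a) with hT
  have hTA : T ⊆ A := by
    intro x hx
    obtain ⟨a, ha, rfl⟩ := Finset.mem_image.mp hx
    have haB := hSB ha
    rw [hBmem] at haB
    exact (hf a haB.1 haB.2).2.2
  have hTsum : ∑ x ∈ T, x = 0 := by
    rw [hT, Finset.sum_image (fun x hx y hy h => hginj x (hSB hx) y (hSB hy) h)]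
    rw [Finset.sum_sub_distrib, hsumf, sub_self]
  exact hzsf T hTA (hSne.image _) hTsum
end

section
/- Let A be a finite, generating, sum-full, zero-sum-free subset of an abelian group G, and let B ⊆ A be a Sidon set. Then A \ B generates G. -/
/-- If `A` is finite, generating, sum-full and zero-sum-free and `B ⊆ A` is Sidon,
then `A \ B` generates the group. -/
theorem complement_of_sidon_generates {G : Type*} [AddCommGroup G] [DecidableEq G] (A B : Finset G)
    (hgen : AddSubgroup.closure (A : Set G) = ⊤)
    (hsf : ∀ a ∈ A, ∃ b ∈ A, ∃ c ∈ A, a = b + c)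
    (hzsf : ∀ S ⊆ A, S.Nonempty → ∑ x ∈ S, x ≠ 0)
    (hBA : B ⊆ A)
    (hSidon : ∀ s₁ ∈ B, ∀ s₂ ∈ B, ∀ s₃ ∈ B, ∀ s₄ ∈ B,
      s₁ + s₂ = s₃ + s₄ → (s₁ = s₃ ∧ s₂ = s₄) ∨ (s₁ = s₄ ∧ s₂ = s₃)) :
    AddSubgroup.closure ((A \ B : Finset G) : Set G) = ⊤ := by
  classical
  set H := AddSubgroup.closure ((A \ B : Finset G) : Set G) with hHdef
  have hAB : ∀ x ∈ A, x ∉ B → x ∈ H := fun x hx hxB =>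
    AddSubgroup.subset_closure (by simp [Finset.mem_sdiff, hx, hxB])
  set P : G → Prop := fun x => x ∈ B ∧ x ∉ H with hPdef
  have hB : ∀ x ∈ B, x ∈ H := by
    by_contra hcon
    push_neg at hcon
    obtain ⟨b, hbB, hbH⟩ := hcon
    have key : ∀ x, P x → ∃ c, P c ∧ ∃ e ∈ A, x = c + e := by
      rintro x ⟨hxB, hxH⟩
      obtain ⟨c, hc, d, hd, hx⟩ := hsf x (hBA hxB)
      by_cases hcH : c ∈ H
      · have hdH : d ∉ H := fun h => hxH (hx ▸ add_mem hcH h)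
        have hdB : d ∈ B := by by_contra h; exact hdH (hAB d hd h)
        exact ⟨d, ⟨hdB, hdH⟩, c, hc, by rw [hx, add_comm]⟩
      · have hcB : c ∈ B := by by_contra h; exact hcH (hAB c hc h)
        exact ⟨c, ⟨hcB, hcH⟩, d, hd, hx⟩
    choose F0 hF0 E0 hE0 hFE0 using key
    set F : G → G := fun x => if h : P x then F0 x h else x with hFdef
    set E : G → G := fun x => if h : P x then E0 x h else x with hEdef
    have hP' : ∀ x, P x → P (F x) ∧ E x ∈ A ∧ x = F x + E x := by
      intro x h
      simp only [hFdef, hEdef, dif_pos h]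
      exact ⟨hF0 x h, hE0 x h, hFE0 x h⟩
    have hiter : ∀ i, P (F^[i] b) := by
      intro i
      induction i with
      | zero => exact ⟨hbB, hbH⟩
      | succ i ih => rw [Function.iterate_succ_apply']; exact (hP' _ ih).1
    have hpig : ∃ i j, i < j ∧ F^[i] b = F^[j] b := by
      obtain ⟨i, -, j, -, hij, heq⟩ :=
        Finset.exists_ne_map_eq_of_card_lt_of_maps_to
          (s := Finset.range (B.card + 1)) (t := B) (by simp)
          (fun i _ => (hiter i).1)
      rcases lt_or_gt_of_ne hij with h | h
      exacts [⟨i, j, h, heq⟩, ⟨j, i, h, heq.symm⟩]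
    obtain ⟨m, n, hmn, hper⟩ := hpig
    set y := F^[m] b with hydef
    have hcyc : ∃ t, 0 < t ∧ F^[t] y = y := by
      refine ⟨n - m, by omega, ?_⟩
      have h1 : F^[(n - m) + m] b = F^[n - m] (F^[m] b) := Function.iterate_add_apply F _ _ b
      rw [Nat.sub_add_cancel hmn.le] at h1
      rw [hydef, ← h1, ← hper]
    set k := Nat.find hcyc with hkdef
    have hk : 0 < k ∧ F^[k] y = y := Nat.find_spec hcyc
    have hPy : ∀ i, P (F^[i] y) := by
      intro i
      rw [hydef, ← Function.iterate_add_apply]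
      exact hiter (i + m)
    have hdist : ∀ i j, i < j → j < k → F^[i] y ≠ F^[j] y := by
      intro i j hij hjk heq
      have h1 : F^[(k - j) + i] y = y := by
        rw [Function.iterate_add_apply, heq, ← Function.iterate_add_apply,
          Nat.sub_add_cancel hjk.le]
        exact hk.2
      exact Nat.find_min hcyc (show (k - j) + i < k by omega) ⟨by omega, h1⟩
    have hstep : ∀ i, F^[i] y = F^[i+1] y + E (F^[i] y) := by
      intro i
      rw [Function.iterate_succ_apply']
      exact (hP' _ (hPy i)).2.2
    have hsum0 : ∑ i ∈ Finset.range k, E (F^[i] y) = 0 := by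
      have hs1 : ∑ i ∈ Finset.range k, F^[i] y =
          (∑ i ∈ Finset.range k, F^[i+1] y) + ∑ i ∈ Finset.range k, E (F^[i] y) := by
        rw [← Finset.sum_add_distrib]
        exact Finset.sum_congr rfl fun i _ => hstep i
      have hs2 : ∑ i ∈ Finset.range k, F^[i+1] y = ∑ i ∈ Finset.range k, F^[i] y := by
        have ha := Finset.sum_range_succ' (fun i => F^[i] y) k
        have hb := Finset.sum_range_succ (fun i => F^[i] y) k
        rw [hb, hk.2] at ha
        simp only [Function.iterate_zero_apply] at ha
        exact (add_right_cancel ha).symm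
      rw [hs2] at hs1
      exact left_eq_add.mp hs1
    have einj : ∀ i j, i < j → j < k → E (F^[i] y) ≠ E (F^[j] y) := by
      intro i j hij hjk heq
      have hq : F^[i] y + F^[j+1] y = F^[j] y + F^[i+1] y := by
        rw [hstep i, hstep j, heq]
        abel
      rcases hSidon _ (hPy i).1 _ (hPy (j+1)).1 _ (hPy j).1 _ (hPy (i+1)).1 hq with
        ⟨h1, _⟩ | ⟨h1, h2⟩
      · exact hdist i j hij hjk h1
      · exact hdist i (i+1) (Nat.lt_succ_self i) (by omega) h1
    set S := (Finset.range k).image (fun i => E (F^[i] y)) with hSdef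
    have hinj : ∀ i ∈ Finset.range k, ∀ j ∈ Finset.range k,
        E (F^[i] y) = E (F^[j] y) → i = j := by
      intro i hi j hj heq
      simp only [Finset.mem_range] at hi hj
      rcases lt_trichotomy i j with h | h | h
      · exact absurd heq (einj i j h hj)
      · exact h
      · exact absurd heq.symm (einj j i h hi)
    refine hzsf S ?_ ?_ ?_
    · intro x hx
      simp only [hSdef, Finset.mem_image] at hx
      obtain ⟨i, -, rfl⟩ := hx
      exact (hP' _ (hPy i)).2.1
    · exact ⟨E (F^[0] y), Finset.mem_image.mpr ⟨0, Finset.mem_range.mpr hk.1, rfl⟩⟩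
    · rw [hSdef, Finset.sum_image hinj]
      exact hsum0
  have hle : AddSubgroup.closure (A : Set G) ≤ H := by
    rw [AddSubgroup.closure_le]
    intro x hx
    simp only [Finset.coe_sort_coe, Finset.mem_coe] at hx
    by_cases hxB : x ∈ B
    · exact hB x hxB
    · exact hAB x hx hxB
  rw [hgen] at hle
  exact le_antisymm le_top hle
end

section
/- Let A be a finite nonempty subset of an elementary abelian 3-group (a vector space over 𝔽₃) such that every element of A is a sum of two other elements of A. Then A contains a nonempty subset summing to 0. -/
/-- A finite nonempty sum-full subset of an elementary abelian 3-group is not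
zero-sum-free. -/
theorem sumfull_not_zerosumfree_char3 {G : Type*} [AddCommGroup G]
    (h3 : ∀ x : G, x + x + x = 0) (A : Finset G) (hA : A.Nonempty)
    (hsf : ∀ a ∈ A, ∃ b ∈ A, ∃ c ∈ A, a = b + c) :
    ∃ S ⊆ A, S.Nonempty ∧ ∑ x ∈ S, x = 0 := by
  classical
  by_contra hcon
  push_neg at hcon
  -- hcon : ∀ S ⊆ A, S.Nonempty → ∑ x ∈ S, x ≠ 0
  have hz : (0 : G) ∉ A := by
    intro h0
    exact hcon {0} (by simpa using h0) ⟨0, by simp⟩ (by simp)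
  -- if x + y = 0 for x y ∈ A, contradiction
  have pairwin : ∀ x ∈ A, ∀ y ∈ A, x + y = 0 → False := by
    intro x hx y hy hxy
    by_cases hxy' : x = y
    · subst hxy'
      have hx0 : x = 0 := by
        have h := h3 x
        rw [hxy] at h
        simpa using h
      exact hz (hx0 ▸ hx)
    · refine hcon {x, y} ?_ ⟨x, by simp⟩ ?_
      · intro z hz'
        simp only [Finset.mem_insert, Finset.mem_singleton] at hz'
        rcases hz' with h | h <;> simp [h, hx, hy]
      · rw [Finset.sum_pair hxy']; exact hxy
  -- every element of A decomposes as a sum of two elements, all three distinct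
  have lemA : ∀ a ∈ A, ∃ b c : G, b ∈ A ∧ c ∈ A ∧ a = b + c ∧ a ≠ b ∧ a ≠ c ∧ b ≠ c := by
    intro a ha
    obtain ⟨b, hb, c, hc, habc⟩ := hsf a ha
    have hbc : b ≠ c := by
      intro h; subst h
      exact pairwin a ha b hb (by rw [habc]; exact h3 b)
    have hab : a ≠ b := by
      intro h; subst h
      have hc0 : c = 0 := by
        have : a + 0 = a + c := by rw [add_zero]; exact habc
        exact (add_left_cancel this).symm
      exact hz (hc0 ▸ hc)
    have hac : a ≠ c := by
      intro h; subst h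
      have hb0 : b = 0 := by
        have h1 : b + a = 0 + a := by rw [zero_add]; exact habc.symm
        exact add_right_cancel h1
      exact hz (hb0 ▸ hb)
    exact ⟨b, c, hb, hc, habc, hab, hac, hbc⟩
  -- the family of nonempty subsets S of A with sum in A \ S
  set F : Finset (Finset G) :=
    A.powerset.filter (fun S => S.Nonempty ∧ (∑ x ∈ S, x) ∈ A ∧ (∑ x ∈ S, x) ∉ S) with hF
  have hmemF : ∀ S : Finset G, S ∈ F ↔
      S ⊆ A ∧ S.Nonempty ∧ (∑ x ∈ S, x) ∈ A ∧ (∑ x ∈ S, x) ∉ S := by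
    intro S
    simp [hF, Finset.mem_filter, Finset.mem_powerset, and_assoc]
  have hFne : F.Nonempty := by
    obtain ⟨a, ha⟩ := hA
    obtain ⟨b, c, hb, hc, habc, hab, hac, hbc⟩ := lemA a ha
    refine ⟨{b, c}, (hmemF _).2 ⟨?_, ⟨b, by simp⟩, ?_, ?_⟩⟩
    · intro z hz'
      simp only [Finset.mem_insert, Finset.mem_singleton] at hz'
      rcases hz' with h | h <;> simp [h, hb, hc]
    · rw [Finset.sum_pair hbc, ← habc]; exact ha
    · rw [Finset.sum_pair hbc, ← habc]
      simp only [Finset.mem_insert, Finset.mem_singleton]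
      push_neg
      exact ⟨hab, hac⟩
  obtain ⟨S, hSF, hmax⟩ := F.exists_max_image Finset.card hFne
  obtain ⟨hSA, hSne, htA, htS⟩ := (hmemF S).1 hSF
  set t : G := ∑ x ∈ S, x with htdef
  obtain ⟨u, v, huA, hvA, ht, htu, htv, huv⟩ := lemA t htA
  by_cases hu : u ∈ S <;> by_cases hv : v ∈ S
  · -- u ∈ S, v ∈ S
    have hvS' : v ∈ S.erase u := Finset.mem_erase.2 ⟨fun h => huv h.symm, hv⟩
    have e1 : (∑ x ∈ S.erase u, x) + u = t := Finset.sum_erase_add S _ hu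
    have e2 : (∑ x ∈ (S.erase u).erase v, x) + v = ∑ x ∈ S.erase u, x :=
      Finset.sum_erase_add _ _ hvS'
    have eR : ∑ x ∈ (S.erase u).erase v, x = 0 := by
      have h1 : ∑ x ∈ S.erase u, x = t - u := eq_sub_of_add_eq e1
      have h2 : ∑ x ∈ (S.erase u).erase v, x = (t - u) - v := by
        rw [← h1]; exact eq_sub_of_add_eq e2
      rw [h2, ht]; abel
    rcases Finset.eq_empty_or_nonempty ((S.erase u).erase v) with hRe | hRne
    · -- S = {u, v}, the "stuck pair" case
      have hcard2 : S.card = 2 := by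
        have c1 : ((S.erase u).erase v).card + 1 = (S.erase u).card :=
          Finset.card_erase_add_one hvS'
        have c2 : (S.erase u).card + 1 = S.card := Finset.card_erase_add_one hu
        rw [hRe] at c1
        simp at c1
        omega
      obtain ⟨p, q, hpA, hqA, hupq, hup, huq, hpq⟩ := lemA u huA
      by_cases hpv : p = v
      · -- u = v + q ; then {t, u, q} is a zero-sum subset
        have hupq' : u = v + q := by rw [hupq, hpv]
        have htq : t ≠ q := by
          intro h
          -- t = q : u = v + t, t = u + v ⇒ v + v = 0
          apply pairwin v hvA v hvA
          have h1 : t = (v + q) + v := by rw [ht, hupq']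
          have h2 : q = (v + q) + v := h ▸ h1
          have h3' : q + 0 = q + (v + v) := by
            rw [add_zero]; nth_rewrite 1 [h2]; abel
          exact (add_left_cancel h3').symm
        have hsum : t + (u + q) = 0 := by
          rw [ht, hupq']
          calc (v + q + v) + ((v + q) + q) = (v + v + v) + (q + q + q) := by abel
            _ = 0 := by rw [h3, h3, add_zero]
        refine hcon {t, u, q} ?_ ⟨t, by simp⟩ ?_
        · intro z hz'
          simp only [Finset.mem_insert, Finset.mem_singleton] at hz'
          rcases hz' with h | h | h <;> simp [h, htA, huA, hqA]
        · rw [Finset.sum_insert (by simp [htu, htq]),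
            Finset.sum_insert (by simpa using huq), Finset.sum_singleton]
          exact hsum
      · by_cases hqv : q = v
        · -- u = p + v ; then {t, u, p} is a zero-sum subset
          have hupq' : u = p + v := by rw [hupq, hqv]
          have htp : t ≠ p := by
            intro h
            -- t = p : u = t + v, t = u + v ⇒ v + v = 0
            apply pairwin v hvA v hvA
            have h1 : t = (p + v) + v := by rw [ht, hupq']
            have h2 : p = (p + v) + v := h ▸ h1
            have h3' : p + 0 = p + (v + v) := by
              rw [add_zero]; nth_rewrite 1 [h2]; abel
            exact (add_left_cancel h3').symm
          have hsum : t + (u + p) = 0 := by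
            rw [ht, hupq']
            calc (p + v + v) + ((p + v) + p) = (p + p + p) + (v + v + v) := by abel
              _ = 0 := by rw [h3, h3, add_zero]
          refine hcon {t, u, p} ?_ ⟨t, by simp⟩ ?_
          · intro z hz'
            simp only [Finset.mem_insert, Finset.mem_singleton] at hz'
            rcases hz' with h | h | h <;> simp [h, htA, huA, hpA]
          · rw [Finset.sum_insert (by simp [htu, htp]),
              Finset.sum_insert (by simpa using hup), Finset.sum_singleton]
            exact hsum
        · -- p ≠ v, q ≠ v : {p, q, v} ∈ F has card 3 > 2, contradiction
          have htp : t ≠ p := by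
            intro h
            -- u = t + q = u + v + q ⇒ v + q = 0
            apply pairwin v hvA q hqA
            have h1 : u = t + q := by rw [hupq, ← h]
            rw [ht] at h1
            have h2 : u + 0 = u + (v + q) := by
              rw [add_zero]; nth_rewrite 1 [h1]; abel
            exact (add_left_cancel h2).symm
          have htq : t ≠ q := by
            intro h
            apply pairwin v hvA p hpA
            have h1 : u = p + t := by rw [hupq, ← h]
            rw [ht] at h1
            have h2 : u + 0 = u + (v + p) := by
              rw [add_zero]; nth_rewrite 1 [h1]; abel
            exact (add_left_cancel h2).symm
          have htvmem : t ≠ v := fun h => htS (h ▸ hv)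
          have hT : ({p, q, v} : Finset G) ∈ F := by
            refine (hmemF _).2 ⟨?_, ⟨p, by simp⟩, ?_, ?_⟩
            · intro z hz'
              simp only [Finset.mem_insert, Finset.mem_singleton] at hz'
              rcases hz' with h | h | h <;> simp [h, hpA, hqA, hvA]
            · rw [Finset.sum_insert (by simp [hpq, hpv]),
                Finset.sum_insert (by simpa using hqv), Finset.sum_singleton,
                ← add_assoc, ← hupq, ← ht]
              exact htA
            · rw [Finset.sum_insert (by simp [hpq, hpv]),
                Finset.sum_insert (by simpa using hqv), Finset.sum_singleton,
                ← add_assoc, ← hupq, ← ht]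
              simp only [Finset.mem_insert, Finset.mem_singleton]
              push_neg
              exact ⟨htp, htq, htvmem⟩
          have hcard3 : ({p, q, v} : Finset G).card = 3 := by
            rw [Finset.card_insert_of_notMem (by simp [hpq, hpv]),
              Finset.card_insert_of_notMem (by simpa using hqv), Finset.card_singleton]
          have := hmax _ hT
          rw [hcard3, hcard2] at this
          omega
    · -- S strictly bigger than {u,v}: the rest is a nonempty zero-sum subset
      exact hcon _ (((S.erase u).erase_subset v).trans ((S.erase_subset u).trans hSA))
        hRne eR
  · -- u ∈ S, v ∉ S : enlarge to S' = insert t (insert v (S.erase u)) with sum u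
    have htv' : t ≠ v := by
      intro h
      apply hz
      have hu0 : u = 0 := by
        have h1 : u + v = 0 + v := by rw [zero_add, ← ht]; exact h
        exact add_right_cancel h1
      exact hu0 ▸ huA
    have hvS' : v ∉ S.erase u := fun h => hv (Finset.mem_of_mem_erase h)
    have htS' : t ∉ insert v (S.erase u) := by
      simp only [Finset.mem_insert]
      push_neg
      exact ⟨htv', fun h => htS (Finset.mem_of_mem_erase h)⟩
    have e1 : (∑ x ∈ S.erase u, x) = t - u := eq_sub_of_add_eq (Finset.sum_erase_add S _ hu)
    have hsum' : ∑ x ∈ insert t (insert v (S.erase u)), x = u := by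
      rw [Finset.sum_insert htS', Finset.sum_insert hvS', e1, ht]
      calc (u + v) + (v + ((u + v) - u)) = u + (v + v + v) := by abel
        _ = u := by rw [h3, add_zero]
    have hS'F : insert t (insert v (S.erase u)) ∈ F := by
      refine (hmemF _).2 ⟨?_, ⟨t, by simp⟩, ?_, ?_⟩
      · intro z hz'
        simp only [Finset.mem_insert] at hz'
        rcases hz' with h | h | h
        · exact h ▸ htA
        · exact h ▸ hvA
        · exact hSA (Finset.mem_of_mem_erase h)
      · rw [hsum']; exact huA
      · rw [hsum']
        simp only [Finset.mem_insert]
        push_neg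
        refine ⟨fun h => htS (h ▸ hu), fun h => huv h, by simp⟩
    have hcard' : (insert t (insert v (S.erase u))).card = S.card + 1 := by
      rw [Finset.card_insert_of_notMem htS', Finset.card_insert_of_notMem hvS']
      have := Finset.card_erase_add_one hu
      omega
    have := hmax _ hS'F
    rw [hcard'] at this
    omega
  · -- v ∈ S, u ∉ S : enlarge to S' = insert t (insert u (S.erase v)) with sum v
    have htu' : t ≠ u := by
      intro h
      apply hz
      have hv0 : v = 0 := by
        have h1 : u + v = u + 0 := by rw [add_zero, ← ht]; exact h
        exact add_left_cancel h1
      exact hv0 ▸ hvA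
    have huS' : u ∉ S.erase v := fun h => hu (Finset.mem_of_mem_erase h)
    have htS' : t ∉ insert u (S.erase v) := by
      simp only [Finset.mem_insert]
      push_neg
      exact ⟨htu', fun h => htS (Finset.mem_of_mem_erase h)⟩
    have e1 : (∑ x ∈ S.erase v, x) = t - v := eq_sub_of_add_eq (Finset.sum_erase_add S _ hv)
    have hsum' : ∑ x ∈ insert t (insert u (S.erase v)), x = v := by
      rw [Finset.sum_insert htS', Finset.sum_insert huS', e1, ht]
      calc (u + v) + (u + ((u + v) - v)) = v + (u + u + u) := by abel
        _ = v := by rw [h3, add_zero]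
    have hS'F : insert t (insert u (S.erase v)) ∈ F := by
      refine (hmemF _).2 ⟨?_, ⟨t, by simp⟩, ?_, ?_⟩
      · intro z hz'
        simp only [Finset.mem_insert] at hz'
        rcases hz' with h | h | h
        · exact h ▸ htA
        · exact h ▸ huA
        · exact hSA (Finset.mem_of_mem_erase h)
      · rw [hsum']; exact hvA
      · rw [hsum']
        simp only [Finset.mem_insert]
        push_neg
        refine ⟨fun h => htS (h ▸ hv), fun h => huv h.symm, by simp⟩
    have hcard' : (insert t (insert u (S.erase v))).card = S.card + 1 := by
      rw [Finset.card_insert_of_notMem htS', Finset.card_insert_of_notMem huS']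
      have := Finset.card_erase_add_one hv
      omega
    have := hmax _ hS'F
    rw [hcard'] at this
    omega
  · -- u ∉ S, v ∉ S : insert t u v into S gives a zero-sum subset
    have hvS' : v ∉ S := hv
    have huS' : u ∉ insert v S := by simp [huv, hu]
    have htS' : t ∉ insert u (insert v S) := by simp [htu, htv, htS]
    have hsum' : ∑ x ∈ insert t (insert u (insert v S)), x = 0 := by
      rw [Finset.sum_insert htS', Finset.sum_insert huS', Finset.sum_insert hvS', ← htdef, ht]
      calc (u + v) + (u + (v + (u + v))) = (u + u + u) + (v + v + v) := by abel
        _ = 0 := by rw [h3, h3, add_zero]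
    refine hcon (insert t (insert u (insert v S))) ?_ ⟨t, by simp⟩ hsum'
    intro z hz'
    simp only [Finset.mem_insert] at hz'
    rcases hz' with h | h | h | h
    · exact h ▸ htA
    · exact h ▸ huA
    · exact h ▸ hvA
    · exact hSA h
end

section
/- Let V be a finite-dimensional vector space over the field 𝔽_p with p prime, and let A be a finite sequence (multiset) of vectors in V with no nonempty subsequence summing to 0. Then the length of A is at most (p-1)·dim V. -/
open MvPolynomial in
/-- Olson's bound: a zero-sum-free sequence in a finite-dimensional `𝔽_p`-vector space
has length at most `(p - 1) · dim V`. -/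
theorem olson_bound {p : ℕ} [Fact p.Prime] {V : Type*} [AddCommGroup V]
    [Module (ZMod p) V] [FiniteDimensional (ZMod p) V] {n : ℕ} (a : Fin n → V)
    (hzsf : ∀ S : Finset (Fin n), S.Nonempty → ∑ i ∈ S, a i ≠ 0) :
    n ≤ (p - 1) * Module.finrank (ZMod p) V := by
  have hp := (Fact.out : p.Prime)
  by_contra hlt
  push_neg at hlt
  set d := Module.finrank (ZMod p) V with hd
  let B := Module.finBasis (ZMod p) V
  -- polynomials
  let f : Fin d → MvPolynomial (Fin n) (ZMod p) :=
    fun j => ∑ i, MvPolynomial.C (B.repr (a i) j) * MvPolynomial.X i ^ (p - 1)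
  have hdeg : ∀ j, (f j).totalDegree ≤ p - 1 := by
    intro j
    refine le_trans (totalDegree_finset_sum _ _) ?_
    apply Finset.sup_le
    intro i _
    calc (MvPolynomial.C (B.repr (a i) j) * MvPolynomial.X i ^ (p - 1)).totalDegree
        ≤ (MvPolynomial.C (B.repr (a i) j)).totalDegree
          + (MvPolynomial.X (R := ZMod p) i ^ (p - 1)).totalDegree := totalDegree_mul _ _
      _ ≤ 0 + (p - 1) * (MvPolynomial.X (R := ZMod p) i).totalDegree := by
          gcongr
          · exact le_of_eq (totalDegree_C _)
          · exact totalDegree_pow _ _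
      _ ≤ p - 1 := by simp [totalDegree_X]
  have hsum : (∑ j, (f j).totalDegree) < Fintype.card (Fin n) := by
    calc (∑ j : Fin d, (f j).totalDegree) ≤ ∑ _j : Fin d, (p - 1) :=
          Finset.sum_le_sum fun j _ => hdeg j
      _ = d * (p - 1) := by simp [mul_comm]
      _ < n := by rw [mul_comm]; exact hlt
      _ = Fintype.card (Fin n) := (Fintype.card_fin n).symm
  have hdvd := char_dvd_card_solutions_of_fintype_sum_lt (K := ZMod p) (σ := Fin n) p hsum
  -- 0 is a solution
  have hp1 : p - 1 ≠ 0 := Nat.sub_ne_zero_of_lt hp.one_lt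
  have h0 : ∀ j, eval (0 : Fin n → ZMod p) (f j) = 0 := by
    intro j
    simp [f, eval_sum, zero_pow hp1]
  rw [Fintype.card_eq_nat_card] at hdvd
  have hpos : 0 < Nat.card { x : Fin n → ZMod p // ∀ j, eval x (f j) = 0 } :=
    Nat.card_pos_iff.mpr ⟨⟨⟨0, h0⟩⟩, inferInstance⟩
  have hcard : 1 < Fintype.card { x : Fin n → ZMod p // ∀ j, eval x (f j) = 0 } := by
    rw [Fintype.card_eq_nat_card]
    exact lt_of_lt_of_le hp.one_lt (Nat.le_of_dvd hpos hdvd)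
  obtain ⟨x, hx⟩ := Fintype.exists_ne_of_one_lt_card hcard ⟨0, h0⟩
  have hxne : (x : Fin n → ZMod p) ≠ 0 := fun h => hx (Subtype.ext h)
  set S : Finset (Fin n) := Finset.univ.filter (fun i => (x : Fin n → ZMod p) i ≠ 0) with hS
  have hSne : S.Nonempty := by
    rcases Function.ne_iff.mp hxne with ⟨i, hi⟩
    exact ⟨i, by simpa [hS] using hi⟩
  apply hzsf S hSne
  apply B.repr.injective
  ext j
  rw [map_sum]
  simp only [Finsupp.coe_finset_sum, Finset.sum_apply]
  have := x.2 j
  rw [show eval (x : Fin n → ZMod p) (f j)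
      = ∑ i, (B.repr (a i) j) * (x : Fin n → ZMod p) i ^ (p - 1) by
    simp [f, eval_sum]] at this
  rw [← Finset.sum_filter_add_sum_filter_not Finset.univ
    (fun i => (x : Fin n → ZMod p) i ≠ 0)] at this
  have h2 : ∑ i ∈ Finset.univ.filter (fun i => ¬ (x : Fin n → ZMod p) i ≠ 0),
      (B.repr (a i) j) * (x : Fin n → ZMod p) i ^ (p - 1) = 0 := by
    apply Finset.sum_eq_zero
    intro i hi
    simp only [Finset.mem_filter, not_not] at hi
    rw [hi.2, zero_pow hp1, mul_zero]
  rw [h2, add_zero] at this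
  have h3 : ∑ i ∈ S, (B.repr (a i) j) * (x : Fin n → ZMod p) i ^ (p - 1)
      = ∑ i ∈ S, (B.repr (a i) j) := by
    apply Finset.sum_congr rfl
    intro i hi
    rw [hS, Finset.mem_filter] at hi
    rw [ZMod.pow_card_sub_one_eq_one hi.2, mul_one]
  have h4 : ∑ i ∈ S, (B.repr (a i)) j = 0 := by
    rw [← h3, hS]; exact this
  simp only [map_zero, Finsupp.coe_zero, Pi.zero_apply]
  exact h4
end

section
/- Let A be a finite nonempty subset of an elementary abelian 2-group (vector space over 𝔽₂) such that every element of A is a sum of two other elements of A. Then A contains a nonempty subset summing to 0. -/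
/-- A finite nonempty sum-full subset of an elementary abelian 2-group is not
zero-sum-free. -/
theorem sumfull_not_zerosumfree_char2 {G : Type*} [AddCommGroup G]
    (h2 : ∀ x : G, x + x = 0) (A : Finset G) (hA : A.Nonempty)
    (hsf : ∀ a ∈ A, ∃ b ∈ A, ∃ c ∈ A, a = b + c) :
    ∃ S ⊆ A, S.Nonempty ∧ ∑ x ∈ S, x = 0 := by
  classical
  obtain ⟨a, ha⟩ := hA
  obtain ⟨b, hb, c, hc, habc⟩ := hsf a ha
  by_cases hbc : b = c
  · subst hbc
    exact ⟨{a}, Finset.singleton_subset_iff.mpr ha, Finset.singleton_nonempty a,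
      by simp [habc, h2]⟩
  by_cases hab : a = b
  · have hc0 : c = 0 := left_eq_add.mp (hab ▸ habc)
    exact ⟨{c}, Finset.singleton_subset_iff.mpr hc, Finset.singleton_nonempty c,
      by simp [hc0]⟩
  by_cases hac : a = c
  · have hb0 : b = 0 := right_eq_add.mp (hac ▸ habc)
    exact ⟨{b}, Finset.singleton_subset_iff.mpr hb, Finset.singleton_nonempty b,
      by simp [hb0]⟩
  · refine ⟨{a, b, c}, ?_, ⟨a, by simp⟩, ?_⟩
    · intro x hx
      simp only [Finset.mem_insert, Finset.mem_singleton] at hx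
      rcases hx with rfl | rfl | rfl <;> assumption
    · rw [Finset.sum_insert (by simp [hab, hac]), Finset.sum_insert (by simp [hbc]),
        Finset.sum_singleton, habc, h2]
end

section
/- Let G be a finite abelian p-group with invariant factors p^{α_1}, …, p^{α_m}. Then the maximal length of a zero-sum-free sequence over G is p^{α_1} + … + p^{α_m} − m. -/
open AddMonoidAlgebra

section IdealAux
variable {R : Type*} [CommRing R]

/-- Sharp binomial bound for ideals: `(I ⊔ J)^(n+m-1) ≤ I^n ⊔ J^m`. -/
lemma olson_sup_pow_le (I J : Ideal R) (n m : ℕ) :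
    (I ⊔ J) ^ (n + m - 1) ≤ I ^ n ⊔ J ^ m := by
  rw [← Ideal.add_eq_sup, ← Ideal.add_eq_sup, add_pow, Ideal.sum_eq_sup]
  apply Finset.sup_le
  intro i hi
  by_cases h : n ≤ i
  · exact Ideal.mul_le_left.trans (Ideal.mul_le_left.trans
      ((Ideal.pow_le_pow_right h).trans le_sup_left))
  · refine Ideal.mul_le_left.trans (Ideal.mul_le_right.trans
      ((Ideal.pow_le_pow_right ?_).trans le_sup_right))
    simp only [Finset.mem_range] at hi
    omega

lemma olson_span_pow_le_bot {ι : Type*} (y : ι → R) (q : ι → ℕ)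
    (hq : ∀ i, 1 ≤ q i) (hy : ∀ i, y i ^ q i = 0) (s : Finset ι) :
    (s.sup fun i => Ideal.span {y i}) ^ ((∑ i ∈ s, (q i - 1)) + 1) ≤ ⊥ := by
  classical
  induction s using Finset.induction_on with
  | empty => simp
  | @insert a s ha ih =>
      rw [Finset.sup_insert, Finset.sum_insert ha]
      have hexp : (q a - 1) + (∑ i ∈ s, (q i - 1)) + 1
          = q a + ((∑ i ∈ s, (q i - 1)) + 1) - 1 := by
        have := hq a; omega
      rw [hexp]
      refine (olson_sup_pow_le _ _ _ _).trans ?_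
      apply sup_le
      · rw [Ideal.span_singleton_pow, hy a]
        simp
      · exact ih

lemma olson_prod_mem_pow {I : Ideal R} (T : Multiset R) (hT : ∀ x ∈ T, x ∈ I) :
    T.prod ∈ I ^ (Multiset.card T) := by
  induction T using Multiset.induction_on with
  | empty => simp
  | cons a T ih =>
      rw [Multiset.prod_cons, Multiset.card_cons, pow_succ, mul_comm (I ^ _) I]
      exact Ideal.mul_mem_mul (hT a (Multiset.mem_cons_self a T))
        (ih fun x hx => hT x (Multiset.mem_cons_of_mem hx))

end IdealAux

section CoeffAux
variable (k : Type*) [CommRing k] (G : Type*) [AddCommGroup G]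

/-- The factor `1 - X^g` in the group algebra. -/
noncomputable def olsonF (g : G) : AddMonoidAlgebra k G :=
  1 - AddMonoidAlgebra.single g 1

variable {k G}

lemma olsonF_def (g : G) : olsonF k G g = 1 - AddMonoidAlgebra.single g 1 := rfl

/-- Claim A: for a zero-sum-free multiset, `∏ (1 - X g)` has coefficient `1` at `0`,
and its support consists of sums of submultisets. -/
lemma olson_coeff_prod (T : Multiset G) (hT : ∀ S ≤ T, S ≠ 0 → S.sum ≠ 0) :
    ((T.map (olsonF k G)).prod : AddMonoidAlgebra k G).coeff 0 = 1 ∧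
      ∀ a : G, ((T.map (olsonF k G)).prod : AddMonoidAlgebra k G).coeff a ≠ 0 →
        ∃ S ≤ T, a = S.sum := by
  induction T using Multiset.induction_on with
  | empty =>
      constructor
      · simp only [Multiset.map_zero, Multiset.prod_zero]
        rw [AddMonoidAlgebra.one_def, AddMonoidAlgebra.coeff_single]
        exact Finsupp.single_eq_same
      · intro a ha
        refine ⟨0, le_refl _, ?_⟩
        simp only [Multiset.map_zero, Multiset.prod_zero] at ha
        rw [AddMonoidAlgebra.one_def, AddMonoidAlgebra.coeff_single] at ha
        by_contra hne
        exact ha (Finsupp.single_eq_of_ne (by simpa [eq_comm] using hne))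
  | cons g T ih =>
      have hT' : ∀ S ≤ T, S ≠ 0 → S.sum ≠ 0 :=
        fun S hS => hT S (hS.trans (Multiset.le_cons_self T g))
      obtain ⟨h0, hsupp⟩ := ih hT'
      set P : AddMonoidAlgebra k G := (T.map (olsonF k G)).prod with hP
      set Q : AddMonoidAlgebra k G := AddMonoidAlgebra.single g 1 * P with hQ
      have hprod : ((g ::ₘ T).map (olsonF k G)).prod = P - Q := by
        rw [Multiset.map_cons, Multiset.prod_cons, olsonF_def, sub_mul, one_mul, hQ]
      have happly : ∀ a : G, (P - Q).coeff a = P.coeff a - P.coeff (-g + a) := by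
        intro a
        rw [AddMonoidAlgebra.coeff_sub, Finsupp.sub_apply, hQ, AddMonoidAlgebra.coeff_single_mul_apply, one_mul]
      constructor
      · rw [hprod, happly, h0]
        have hPg : P.coeff (-g + 0) = 0 := by
          by_contra hne
          obtain ⟨S, hS, hsum⟩ := hsupp _ hne
          refine hT (g ::ₘ S) (Multiset.cons_le_cons g hS) (Multiset.cons_ne_zero) ?_
          rw [Multiset.sum_cons, ← hsum]
          simp
        rw [hPg, sub_zero]
      · intro a ha
        rw [hprod, happly] at ha
        by_cases h1 : P.coeff a ≠ 0
        · obtain ⟨S, hS, hsum⟩ := hsupp _ h1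
          exact ⟨S, hS.trans (Multiset.le_cons_self T g), hsum⟩
        · push_neg at h1
          have h2 : P.coeff (-g + a) ≠ 0 := by
            intro h2; rw [h1, h2, sub_zero] at ha; exact ha rfl
          obtain ⟨S, hS, hsum⟩ := hsupp _ h2
          refine ⟨g ::ₘ S, Multiset.cons_le_cons g hS, ?_⟩
          rw [Multiset.sum_cons, ← hsum]
          abel

lemma olson_one_sub_single_add (a b : G) :
    olsonF k G (a + b)
      = olsonF k G a + AddMonoidAlgebra.single a 1 * olsonF k G b := by
  have h : (AddMonoidAlgebra.single a 1 : AddMonoidAlgebra k G)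
      * AddMonoidAlgebra.single b 1 = AddMonoidAlgebra.single (a + b) 1 := by
    rw [AddMonoidAlgebra.single_mul_single, one_mul]
  rw [olsonF_def, olsonF_def, olsonF_def, mul_sub, mul_one, h]
  ring

lemma olsonF_zero : olsonF k G 0 = 0 := by
  rw [olsonF_def, ← AddMonoidAlgebra.one_def, sub_self]

lemma olson_one_sub_single_mem {J : Ideal (AddMonoidAlgebra k G)} {a : G}
    (ha : olsonF k G a ∈ J) (n : ℕ) :
    olsonF k G (n • a) ∈ J := by
  induction n with
  | zero => rw [zero_smul, olsonF_zero]; exact J.zero_mem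
  | succ n ih =>
      rw [succ_nsmul', olson_one_sub_single_add]
      exact Ideal.add_mem J ha (Ideal.mul_mem_left J _ ih)

end CoeffAux

/-- Olson's theorem: the maximal length of a zero-sum-free sequence over the abelian
`p`-group with invariants `p^{α_1}, …, p^{α_m}` equals `p^{α_1} + ⋯ + p^{α_m} - m`. -/
theorem olson_max_zerosumfree_length (p : ℕ) (hp : p.Prime) (m : ℕ) (α : Fin m → ℕ)
    (hα : ∀ i, 1 ≤ α i) :
    IsGreatest {n : ℕ | ∃ T : Multiset (∀ i : Fin m, ZMod (p ^ α i)),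
        Multiset.card T = n ∧ ∀ S ≤ T, S ≠ 0 → S.sum ≠ 0}
      ((∑ i, p ^ α i) - m) := by
  classical
  haveI : Fact p.Prime := ⟨hp⟩
  set G := (∀ i : Fin m, ZMod (p ^ α i)) with hG
  have hq1 : ∀ i, 1 < p ^ α i := fun i =>
    Nat.one_lt_pow (by have := hα i; omega) hp.one_lt
  haveI : ∀ i, NeZero (p ^ α i) := fun i => ⟨by have := hq1 i; omega⟩
  haveI : ∀ i, Fact (1 < p ^ α i) := fun i => ⟨hq1 i⟩
  set e : Fin m → G := fun i => Pi.single i 1 with he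
  have he_inj : Function.Injective e := by
    intro i j hij
    by_contra hne
    have h1 := congrFun hij i
    rw [he] at h1
    simp only at h1
    rw [Pi.single_eq_same, Pi.single_eq_of_ne hne] at h1
    exact one_ne_zero h1
  have hsum_eq : (∑ i, (p ^ α i - 1)) = (∑ i, p ^ α i) - m := by
    have h1 : (∑ i, ((p ^ α i - 1) + 1)) = ∑ i, p ^ α i :=
      Finset.sum_congr rfl fun i _ => by have := hq1 i; omega
    rw [Finset.sum_add_distrib, Finset.sum_const, Finset.card_univ,
      Fintype.card_fin, smul_eq_mul, mul_one] at h1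
    omega
  constructor
  · -- membership: the multiset with p^{α i} - 1 copies of e i
    refine ⟨∑ i, Multiset.replicate (p ^ α i - 1) (e i), ?_, ?_⟩
    · rw [Multiset.card_sum]
      simp only [Multiset.card_replicate]
      exact hsum_eq
    · intro S hS hS0
      have helems : ∀ g ∈ S, ∃ j, g = e j := by
        intro g hg
        have hg' := Multiset.mem_of_le hS hg
        rw [Multiset.mem_sum] at hg'
        obtain ⟨j, _, hj⟩ := hg'
        exact ⟨j, (Multiset.eq_of_mem_replicate hj)⟩
      have hsumcoord : ∀ (S : Multiset G), (∀ g ∈ S, ∃ j, g = e j) →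
          ∀ i, S.sum i = ((S.count (e i) : ℕ) : ZMod (p ^ α i)) := by
        intro S
        induction S using Multiset.induction_on with
        | empty => intro _ i; rw [Multiset.sum_zero, Multiset.count_zero, Nat.cast_zero]; rfl
        | cons g S ih =>
            intro hmem i
            obtain ⟨j, rfl⟩ := hmem g (Multiset.mem_cons_self g S)
            have ih' := ih (fun x hx => hmem x (Multiset.mem_cons_of_mem hx)) i
            rw [Multiset.sum_cons, Multiset.count_cons, Pi.add_apply, ih']
            by_cases hji : j = i
            · subst hji
              rw [if_pos rfl, Nat.cast_add, Nat.cast_one]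
              have h3 : e j j = 1 := by simp only [he]; exact Pi.single_eq_same j 1
              rw [h3]; ring
            · have hne : e i ≠ e j := fun h => hji (he_inj h).symm
              rw [if_neg hne, Nat.cast_add, Nat.cast_zero, add_zero]
              have h3 : e j i = 0 := by
                simp only [he]; exact Pi.single_eq_of_ne (fun h => hji h.symm) 1
              rw [h3, zero_add]
      obtain ⟨g, hg⟩ := Multiset.exists_mem_of_ne_zero hS0
      obtain ⟨j, rfl⟩ := helems g hg
      have hcount_pos : 0 < S.count (e j) := Multiset.count_pos.mpr hg
      have hcount_le : S.count (e j) ≤ p ^ α j - 1 := by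
        refine le_trans (Multiset.count_le_of_le _ hS) ?_
        rw [Multiset.count_sum']
        have hterm : ∀ i : Fin m, (Multiset.replicate (p ^ α i - 1) (e i)).count (e j)
            = if i = j then p ^ α i - 1 else 0 := by
          intro i
          rw [Multiset.count_replicate]
          by_cases hij : i = j
          · simp [hij]
          · rw [if_neg (fun h => hij (he_inj h)), if_neg hij]
        rw [Finset.sum_congr rfl fun i _ => hterm i, Finset.sum_ite_eq' Finset.univ j]
        simp
      intro hzero
      have hcoord := hsumcoord S helems j
      rw [hzero] at hcoord
      have hdvd : (p ^ α j : ℕ) ∣ S.count (e j) :=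
        (ZMod.natCast_eq_zero_iff _ _).mp (by simpa using hcoord.symm)
      have := Nat.le_of_dvd hcount_pos hdvd
      omega
  · -- upper bound
    rintro n ⟨T, hcard, hT⟩
    by_contra hlt
    push_neg at hlt
    have hD : (∑ i, (p ^ α i - 1)) + 1 ≤ Multiset.card T := by
      rw [hcard]; omega
    haveI : CharP (AddMonoidAlgebra (ZMod p) G) p := by
      refine charP_of_injective_ringHom
        (f := AddMonoidAlgebra.singleZeroRingHom (R := ZMod p) (M := G)) ?_ p
      intro a b hab
      simpa using (AddMonoidAlgebra.single_right_injective (m := (0 : G))) hab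
    set J : Ideal (AddMonoidAlgebra (ZMod p) G) :=
      Ideal.span (Set.range fun i => olsonF (ZMod p) G (e i)) with hJ
    have hgen : ∀ i : Fin m, olsonF (ZMod p) G (e i) ∈ J := fun i =>
      Ideal.subset_span ⟨i, rfl⟩
    have hmemJ : ∀ g : G, olsonF (ZMod p) G g ∈ J := by
      intro g
      have hrep : g = ∑ i, Pi.single i (g i) := by
        ext j; rw [Finset.sum_apply]; exact (Fintype.sum_pi_single j g).symm
      rw [hrep]
      have haux : ∀ s : Finset (Fin m),
          olsonF (ZMod p) G (∑ i ∈ s, Pi.single i (g i)) ∈ J := by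
        intro s
        induction s using Finset.induction_on with
        | empty => rw [Finset.sum_empty, olsonF_zero]; exact J.zero_mem
        | @insert a s ha ih =>
            rw [Finset.sum_insert ha, olson_one_sub_single_add]
            refine Ideal.add_mem J ?_ (Ideal.mul_mem_left J _ ih)
            have hsingle : (Pi.single a (g a) : G) = ((g a).val) • e a := by
              ext j
              rw [Pi.smul_apply]
              simp only [he]
              by_cases hj : j = a
              · subst hj
                rw [Pi.single_eq_same, Pi.single_eq_same, nsmul_eq_mul, mul_one,
                  ZMod.natCast_val, ZMod.cast_id]
              · rw [Pi.single_eq_of_ne hj, Pi.single_eq_of_ne hj, smul_zero]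
            rw [hsingle]
            exact olson_one_sub_single_mem (hgen a) _
      exact haux Finset.univ
    have hnil : ∀ i : Fin m, (olsonF (ZMod p) G (e i)) ^ (p ^ α i) = 0 := by
      intro i
      have hsmul : (p ^ α i) • e i = 0 := by
        ext j
        rw [Pi.smul_apply]
        simp only [he]
        by_cases hj : j = i
        · subst hj
          rw [Pi.single_eq_same, nsmul_eq_mul, mul_one, ZMod.natCast_self, Pi.zero_apply]
        · rw [Pi.single_eq_of_ne hj, smul_zero, Pi.zero_apply]
      rw [olsonF_def, sub_pow_char_pow, one_pow, AddMonoidAlgebra.single_pow,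
        one_pow, hsmul, ← AddMonoidAlgebra.one_def, sub_self]
    set f : AddMonoidAlgebra (ZMod p) G := (T.map (olsonF (ZMod p) G)).prod with hf
    have hfJ : f ∈ J ^ Multiset.card T := by
      rw [hf, ← Multiset.card_map (olsonF (ZMod p) G) T]
      exact olson_prod_mem_pow _ (by
        intro x hx
        obtain ⟨g, _, rfl⟩ := Multiset.mem_map.mp hx
        exact hmemJ g)
    have hJpow : J ^ ((∑ i, (p ^ α i - 1)) + 1) ≤ ⊥ := by
      have hspan : J ≤ Finset.univ.sup fun i => Ideal.span {olsonF (ZMod p) G (e i)} := by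
        rw [hJ, Ideal.span_le]
        rintro x ⟨i, rfl⟩
        have hle : Ideal.span {olsonF (ZMod p) G (e i)}
            ≤ Finset.univ.sup fun i => Ideal.span {olsonF (ZMod p) G (e i)} :=
          Finset.le_sup (f := fun i => Ideal.span {olsonF (ZMod p) G (e i)}) (Finset.mem_univ i)
        exact hle (Ideal.subset_span rfl)
      calc J ^ ((∑ i, (p ^ α i - 1)) + 1)
          ≤ (Finset.univ.sup fun i => Ideal.span {olsonF (ZMod p) G (e i)})
              ^ ((∑ i, (p ^ α i - 1)) + 1) := Ideal.pow_right_mono hspan _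
        _ ≤ ⊥ := olson_span_pow_le_bot _ (fun i => p ^ α i)
              (fun i => (hq1 i).le) hnil Finset.univ
    have hf0 : f = 0 := by
      have hb : f ∈ (⊥ : Ideal (AddMonoidAlgebra (ZMod p) G)) :=
        hJpow ((Ideal.pow_le_pow_right hD) hfJ)
      simpa using hb
    have hcoeff := (olson_coeff_prod (k := ZMod p) T hT).1
    rw [← hf, hf0] at hcoeff
    simp at hcoeff
end

section
/- Let A be a finite, generating, sum-full subset of an abelian group G, and let H be a proper subgroup of G. If A is zero-sum-free, then there exists an infinite sequence a_1, a_2, … of elements of A \ H and a sequence b_1, b_2, … of elements of A with a_k = a_{k+1} + b_k for all k ≥ 1. -/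
/-- In a generating, sum-full, zero-sum-free finite set there is an infinite chain
`a_k = a_{k+1} + b_k` with all `a_k` outside a given proper subgroup. -/
theorem exists_infinite_chain {G : Type*} [AddCommGroup G] (A : Finset G)
    (hgen : AddSubgroup.closure (A : Set G) = ⊤)
    (hsf : ∀ a ∈ A, ∃ b ∈ A, ∃ c ∈ A, a = b + c)
    (H : AddSubgroup G) (hH : H ≠ ⊤)
    (hzsf : ∀ S ⊆ A, S.Nonempty → ∑ x ∈ S, x ≠ 0) :
    ∃ a : ℕ → G, ∃ b : ℕ → G,
      (∀ k, a k ∈ A ∧ a k ∉ H) ∧ (∀ k, b k ∈ A) ∧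
      ∀ k, a k = a (k + 1) + b k := by
  -- there is an element of A outside H
  have h0 : ∃ x : G, x ∈ A ∧ x ∉ H := by
    by_contra h
    push_neg at h
    apply hH
    rw [← top_le_iff, ← hgen, AddSubgroup.closure_le]
    intro x hx
    exact h x hx
  -- extension step
  have key : ∀ x, x ∈ A ∧ x ∉ H → ∃ y, (y ∈ A ∧ y ∉ H) ∧ x - y ∈ A := by
    rintro x ⟨hxA, hxH⟩
    obtain ⟨b, hb, c, hc, hbc⟩ := hsf x hxA
    by_cases hbH : b ∈ H
    · refine ⟨c, ⟨hc, fun hcH => hxH ?_⟩, ?_⟩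
      · rw [hbc]; exact H.add_mem hbH hcH
      · have : x - c = b := by rw [hbc]; abel
        rwa [this]
    · refine ⟨b, ⟨hb, hbH⟩, ?_⟩
      have : x - b = c := by rw [hbc]; abel
      rwa [this]
  -- build the chain
  obtain ⟨x0, hx0⟩ := h0
  let g : ℕ → {x : G // x ∈ A ∧ x ∉ H} := fun n =>
    Nat.rec ⟨x0, hx0⟩ (fun _ p => ⟨Classical.choose (key p.1 p.2),
      (Classical.choose_spec (key p.1 p.2)).1⟩) n
  refine ⟨fun n => (g n).1, fun n => (g n).1 - (g (n + 1)).1, fun k => (g k).2, ?_, ?_⟩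
  · intro k
    have := (Classical.choose_spec (key (g k).1 (g k).2)).2
    exact this
  · intro k
    rw [add_sub_cancel]
end

section
/- The problem of the existence of a finite, nonempty, sum-full, zero-sum-free subset of the reals is equivalent to the corresponding problem for the integers: if there exists a finite nonempty sum-full zero-sum-free subset A ⊆ ℝ, then there exists one in ℤ. -/
/-- Over `ℚ`, a finite set of nonzero reals admits a `ℚ`-linear functional
nonvanishing on all of them. -/
lemma exists_functional (T : Finset ℝ) (hT : ∀ v ∈ T, v ≠ (0:ℝ)) :
    ∃ f : ℝ →ₗ[ℚ] ℚ, ∀ v ∈ T, f v ≠ 0 := by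
  classical
  revert hT
  induction T using Finset.induction_on with
  | empty => exact fun _ => ⟨0, by simp⟩
  | @insert v T hvT ih =>
    intro hT'
    obtain ⟨f, hf⟩ := ih (fun u hu => hT' u (Finset.mem_insert_of_mem hu))
    have hv : v ≠ 0 := hT' v (Finset.mem_insert_self v T)
    -- a functional nonzero at v, via a basis of ℝ over ℚ
    obtain ⟨g, hg⟩ : ∃ g : ℝ →ₗ[ℚ] ℚ, g v ≠ 0 := by
      set b := Module.Basis.ofVectorSpace ℚ ℝ
      have : b.repr v ≠ 0 := by simpa using hv
      obtain ⟨i, hi⟩ := Finsupp.ne_iff.mp this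
      exact ⟨b.coord i, by simpa [Module.Basis.coord_apply] using hi⟩
    obtain ⟨c, hc⟩ := Infinite.exists_notMem_finset
      ((insert v T).image (fun u => -f u / g u))
    refine ⟨f + c • g, fun u hu => ?_⟩
    have hcb : c ≠ -f u / g u := by
      intro h
      exact hc (by rw [h]; exact Finset.mem_image_of_mem _ hu)
    simp only [LinearMap.add_apply, LinearMap.smul_apply, smul_eq_mul]
    by_cases hgu : g u = 0
    · have huT : u ∈ T := by
        rcases Finset.mem_insert.mp hu with rfl | h
        · exact absurd hgu hg
        · exact h
      simpa [hgu] using hf u huT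
    · intro habs
      apply hcb
      field_simp
      linarith [habs]

/-- If there is a finite nonempty sum-full zero-sum-free set of reals, then there is
one consisting of integers. -/
theorem real_to_int_reduction
    (h : ∃ A : Finset ℝ, A.Nonempty ∧ (∀ a ∈ A, ∃ b ∈ A, ∃ c ∈ A, a = b + c) ∧
      ∀ S ⊆ A, S.Nonempty → ∑ x ∈ S, x ≠ 0) :
    ∃ A : Finset ℤ, A.Nonempty ∧ (∀ a ∈ A, ∃ b ∈ A, ∃ c ∈ A, a = b + c) ∧
      ∀ S ⊆ A, S.Nonempty → ∑ x ∈ S, x ≠ 0 := by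
  classical
  obtain ⟨A, hne, hfull, hzsf⟩ := h
  -- functional nonvanishing on all nonempty subset sums
  obtain ⟨f, hf⟩ := exists_functional
      ((A.powerset.filter (fun S => S.Nonempty)).image (fun S => ∑ x ∈ S, x))
      (by
        intro v hv
        simp only [Finset.mem_image, Finset.mem_filter, Finset.mem_powerset] at hv
        obtain ⟨S, ⟨hSA, hSne⟩, rfl⟩ := hv
        exact hzsf S hSA hSne)
  have hfS : ∀ S ⊆ A, S.Nonempty → f (∑ x ∈ S, x) ≠ 0 := by
    intro S hSA hSne
    apply hf
    exact Finset.mem_image_of_mem _ (by simp [Finset.mem_filter, hSA, hSne])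
  -- clear denominators
  set D : ℕ := ∏ a ∈ A, (f a).den with hD
  have hDpos : 0 < D := Finset.prod_pos (fun a _ => (f a).pos)
  set g : ℝ → ℤ := fun x => ((D : ℚ) * f x).num with hg
  have hint : ∀ a ∈ A, ((g a : ℚ)) = (D : ℚ) * f a := by
    intro a ha
    obtain ⟨k, hk⟩ : (f a).den ∣ D := Finset.dvd_prod_of_mem _ ha
    have key : ((f a).den : ℚ) * f a = (f a).num := by
      have hd : ((f a).den : ℚ) ≠ 0 := by exact_mod_cast (f a).den_nz
      have h2 := Rat.num_div_den (f a)
      rw [div_eq_iff hd] at h2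
      linarith
    have : (D : ℚ) * f a = ((k * (f a).num : ℤ) : ℚ) := by
      rw [hk]
      push_cast
      rw [← key]
      ring
    rw [hg]
    simp only [this, Rat.num_intCast]
  refine ⟨A.image g, hne.image g, ?_, ?_⟩
  · intro a' ha'
    obtain ⟨a, ha, rfl⟩ := Finset.mem_image.mp ha'
    obtain ⟨b, hb, c, hc, habc⟩ := hfull a ha
    refine ⟨g b, Finset.mem_image_of_mem g hb, g c, Finset.mem_image_of_mem g hc, ?_⟩
    have : ((g a : ℚ)) = ((g b : ℚ)) + ((g c : ℚ)) := by
      rw [hint a ha, hint b hb, hint c hc, habc, map_add]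
      ring
    exact_mod_cast this
  · intro S' hS' hS'ne habs
    -- choose a section of g over S'
    have hsec : ∀ y ∈ S', ∃ a ∈ A, g a = y := by
      intro y hy
      exact Finset.mem_image.mp (hS' hy)
    choose! sec hsecA hsecg using hsec
    set t : Finset ℝ := S'.image sec with ht
    have htA : t ⊆ A := by
      intro a ha
      obtain ⟨y, hy, rfl⟩ := Finset.mem_image.mp ha
      exact hsecA y hy
    have htne : t.Nonempty := hS'ne.image sec
    have hinj : Set.InjOn sec S' := by
      intro y₁ h₁ y₂ h₂ he
      rw [← hsecg y₁ h₁, ← hsecg y₂ h₂, he]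
    have hsum : ∑ a ∈ t, g a = ∑ y ∈ S', y := by
      rw [ht, Finset.sum_image (fun x hx y hy => hinj hx hy)]
      exact Finset.sum_congr rfl (fun y hy => hsecg y hy)
    have h0 : ∑ a ∈ t, ((g a : ℚ)) = 0 := by
      have : ((∑ a ∈ t, g a : ℤ) : ℚ) = 0 := by rw [hsum, habs]; simp
      push_cast at this
      exact this
    rw [Finset.sum_congr rfl (fun a ha => hint a (htA ha))] at h0
    rw [← Finset.mul_sum, ← map_sum] at h0
    rcases mul_eq_zero.mp h0 with h | h
    · exact absurd h (by positivity)
    · exact hfS t htA htne h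
end

section
/- There exists an infinite set A of integers such that every element of A is a sum of two other elements of A, and no finite nonempty subset of A has sum 0. -/
private def egmoG (n : ℕ) : ℤ := (-1) ^ n * (Nat.fib (n + 2) : ℤ)

private lemma egmoG_rec (n : ℕ) : egmoG n = egmoG (n + 1) + egmoG (n + 2) := by
  unfold egmoG
  have h : (Nat.fib (n + 4) : ℤ) = (Nat.fib (n + 2) : ℤ) + (Nat.fib (n + 3) : ℤ) := by
    have := Nat.fib_add_two (n := n + 2)
    push_cast [this]; ring
  have h4 : n + 2 + 2 = n + 4 := by ring
  rw [show n + 1 + 2 = n + 3 from by ring, h4, h]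
  ring

private lemma egmoG_inj : Function.Injective egmoG := by
  have hmono : StrictMono (fun n : ℕ => Nat.fib (n + 2)) :=
    strictMono_nat_of_lt_succ fun n => Nat.fib_lt_fib_succ (by omega)
  intro m n h
  have habs : Nat.fib (m + 2) = Nat.fib (n + 2) := by
    have := congrArg (fun x : ℤ => x.natAbs) h
    simpa [egmoG, Int.natAbs_mul, Int.natAbs_pow] using this
  exact hmono.injective habs

private lemma egmo_key (t : ℕ) : ∀ T : Finset ℕ, (∀ n ∈ T, n < t) →
    1 - (Nat.fib (t + 2) : ℤ) ≤ (-1) ^ t * ∑ n ∈ T, egmoG n ∧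
      (-1) ^ t * ∑ n ∈ T, egmoG n ≤ (Nat.fib (t + 1) : ℤ) - 1 := by
  induction t with
  | zero =>
    intro T hT
    have : T = ∅ := Finset.eq_empty_of_forall_notMem fun n hn => Nat.not_lt_zero n (hT n hn)
    subst this; simp
  | succ t ih =>
    intro T hT
    have hsq : ((-1 : ℤ) ^ t) * ((-1 : ℤ) ^ t) = 1 := by
      rw [← pow_add, ← two_mul, pow_mul]; norm_num
    have r1 : (Nat.fib (t + 1 + 2) : ℤ) = (Nat.fib (t + 1) : ℤ) + (Nat.fib (t + 2) : ℤ) := by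
      have := Nat.fib_add_two (n := t + 1)
      push_cast [this]; ring
    have r2 : (Nat.fib (t + 2) : ℤ) = (Nat.fib t : ℤ) + (Nat.fib (t + 1) : ℤ) := by
      have := Nat.fib_add_two (n := t)
      push_cast [this]; ring
    have hfpos : (0 : ℤ) ≤ (Nat.fib t : ℤ) := by positivity
    have hpow : ((-1 : ℤ)) ^ (t + 1) = -((-1 : ℤ) ^ t) := by rw [pow_succ]; ring
    by_cases ht : t ∈ T
    · have hsub : ∀ n ∈ T.erase t, n < t := fun n hn =>
        lt_of_le_of_ne (Nat.lt_succ_iff.mp (hT n (Finset.mem_of_mem_erase hn)))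
          (Finset.ne_of_mem_erase hn)
      obtain ⟨h1, h2⟩ := ih (T.erase t) hsub
      have hsum : ∑ n ∈ T, egmoG n = egmoG t + ∑ n ∈ T.erase t, egmoG n :=
        (Finset.add_sum_erase _ _ ht).symm
      have hgt : egmoG t = (-1) ^ t * (Nat.fib (t + 2) : ℤ) := rfl
      rw [hsum, hpow, hgt]
      have e : -((-1 : ℤ) ^ t) * ((-1) ^ t * (Nat.fib (t + 2) : ℤ) + ∑ n ∈ T.erase t, egmoG n)
          = -(((-1 : ℤ) ^ t) * ((-1 : ℤ) ^ t)) * (Nat.fib (t + 2) : ℤ)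
            - (-1 : ℤ) ^ t * ∑ n ∈ T.erase t, egmoG n := by ring
      rw [hsq] at e
      rw [e]
      constructor <;> linarith
    · have hsub : ∀ n ∈ T, n < t := fun n hn =>
        lt_of_le_of_ne (Nat.lt_succ_iff.mp (hT n hn)) (fun h => ht (h ▸ hn))
      obtain ⟨h1, h2⟩ := ih T hsub
      rw [hpow]
      have e : -((-1 : ℤ) ^ t) * ∑ n ∈ T, egmoG n
          = -((-1 : ℤ) ^ t * ∑ n ∈ T, egmoG n) := by ring
      rw [e]
      constructor <;> linarith

private lemma egmo_pos (T : Finset ℕ) (hT : T.Nonempty) :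
    ∃ t, 1 ≤ (-1) ^ t * ∑ n ∈ T, egmoG n := by
  set t := T.max' hT with htdef
  refine ⟨t, ?_⟩
  have hsub : ∀ n ∈ T.erase t, n < t := fun n hn =>
    lt_of_le_of_ne (T.le_max' n (Finset.mem_of_mem_erase hn)) (Finset.ne_of_mem_erase hn)
  obtain ⟨h1, _⟩ := egmo_key t (T.erase t) hsub
  have hsum : ∑ n ∈ T, egmoG n = egmoG t + ∑ n ∈ T.erase t, egmoG n :=
    (Finset.add_sum_erase _ _ (T.max'_mem hT)).symm
  have hsq : ((-1 : ℤ) ^ t) * ((-1 : ℤ) ^ t) = 1 := by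
    rw [← pow_add, ← two_mul, pow_mul]; norm_num
  have hgt : egmoG t = (-1) ^ t * (Nat.fib (t + 2) : ℤ) := rfl
  rw [hsum, hgt]
  have e : ((-1 : ℤ) ^ t) * ((-1) ^ t * (Nat.fib (t + 2) : ℤ) + ∑ n ∈ T.erase t, egmoG n)
      = (((-1 : ℤ) ^ t) * ((-1 : ℤ) ^ t)) * (Nat.fib (t + 2) : ℤ)
        + (-1 : ℤ) ^ t * ∑ n ∈ T.erase t, egmoG n := by ring
  rw [hsq] at e
  rw [e]
  linarith

/-- EGMO 2012 Problem 4: there is an infinite sum-full zero-sum-free set of integers. -/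
theorem exists_infinite_sumfull_zerosumfree :
    ∃ A : Set ℤ, A.Infinite ∧ (∀ a ∈ A, ∃ b ∈ A, ∃ c ∈ A, a = b + c) ∧
      ∀ S : Finset ℤ, ↑S ⊆ A → S.Nonempty → ∑ x ∈ S, x ≠ 0 := by
  refine ⟨Set.range egmoG, Set.infinite_range_of_injective egmoG_inj, ?_, ?_⟩
  · rintro a ⟨n, rfl⟩
    exact ⟨egmoG (n + 1), ⟨n + 1, rfl⟩, egmoG (n + 2), ⟨n + 2, rfl⟩, egmoG_rec n⟩
  · intro S hS hSne
    have hinj : Set.InjOn egmoG (egmoG ⁻¹' ↑S) := egmoG_inj.injOn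
    set T : Finset ℕ := S.preimage egmoG hinj with hTdef
    have hsum : ∑ n ∈ T, egmoG n = ∑ x ∈ S, x := by
      exact Finset.sum_preimage egmoG S hinj id (fun x hx hx' => absurd (hS hx) hx')
    have hTne : T.Nonempty := by
      obtain ⟨x, hx⟩ := hSne
      obtain ⟨n, rfl⟩ := hS hx
      exact ⟨n, Finset.mem_preimage.mpr hx⟩
    obtain ⟨t, hpos⟩ := egmo_pos T hTne
    intro h0
    rw [hsum, h0, mul_zero] at hpos
    norm_num at hpos
end
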